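/- Let F = [[α,β],[γ,δ]] be a matrix over ℤ/dℤ with αδ − βγ = 1 and with β invertible in ℤ/dℤ. Define the d×d matrix U_F with entries (U_F)_{r,s} = (1/√d)·τ^{β^{−1}(δr² − 2rs + αs²)} for r, s ∈ ℤ/dℤ. Then U_F is unitary and U_F D_p U_F† = D_{Fp} for all p ∈ (ℤ/dℤ)², i.e. U_F is a symplectic (Clifford) unitary implementing F on the displacement operators. -/

import Mathlib

open Matrix Complex Finset

/-- `τ = -exp(iπ/d)`. -/
noncomputable def tau (d : ℕ) : ℂ := -Complex.exp (Real.pi * Complex.I / d)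

/-- The displacement operator `D_p = D_{i,j}`, with `(r,s)` entry
`τ^{ij+2js} δ_{r,s+i}` (exponents of the `d`-th root of unity `τ` taken mod `d`). -/
noncomputable def Disp (d : ℕ) [NeZero d] (p : ZMod d × ZMod d) :
    Matrix (ZMod d) (ZMod d) ℂ :=
  Matrix.of fun r s =>
    tau d ^ ((p.1 * p.2 + 2 * p.2 * s).val) * (if r = s + p.1 then 1 else 0)

/-- The symplectic (Weyl) unitary associated to `F = [[α,β],[γ,δ]]` with `β`
invertible: `(U_F)_{r,s} = (1/√d)·τ^{β⁻¹(δr² - 2rs + αs²)}`. -/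
noncomputable def sympU (d : ℕ) [NeZero d] (α β γ δ : ZMod d) :
    Matrix (ZMod d) (ZMod d) ℂ :=
  Matrix.of fun r s =>
    (1 / Real.sqrt d : ℂ) * tau d ^ ((β⁻¹ * (δ * r ^ 2 - 2 * r * s + α * s ^ 2)).val)

section Aux

lemma tau_pow_d (d : ℕ) (hodd : Odd d) : tau d ^ d = 1 := by
  have hd0 : (d:ℂ) ≠ 0 := Nat.cast_ne_zero.mpr hodd.pos.ne'
  rw [tau, neg_pow, hodd.neg_one_pow, ← Complex.exp_nat_mul]
  have h : (d:ℂ) * (Real.pi * Complex.I / d) = Real.pi * Complex.I := by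
    field_simp
  rw [h, Complex.exp_pi_mul_I]
  ring

lemma tau_sq (d : ℕ) : tau d ^ 2 = Complex.exp (2 * Real.pi * Complex.I / d) := by
  rw [tau, neg_sq, sq, ← Complex.exp_add]
  congr 1
  ring

lemma tau_prim (d : ℕ) [NeZero d] (hodd : Odd d) : IsPrimitiveRoot (tau d) d := by
  have hd0 : d ≠ 0 := NeZero.ne d
  obtain ⟨k, hk⟩ := hodd
  have hodd' : Odd d := ⟨k, hk⟩
  have hω : IsPrimitiveRoot (tau d ^ 2) d := by
    rw [tau_sq]; exact Complex.isPrimitiveRoot_exp d hd0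
  have htau : tau d = (tau d ^ 2) ^ (k + 1) := by
    rw [← pow_mul]
    have : 2 * (k + 1) = d + 1 := by omega
    rw [this, pow_succ, tau_pow_d d hodd', one_mul]
  have hcop : Nat.Coprime (k + 1) d := by
    have hg1 : Nat.gcd (k+1) d ∣ 2 * (k+1) := (Nat.gcd_dvd_left (k+1) d).mul_left 2
    have hg2 : Nat.gcd (k+1) d ∣ d := Nat.gcd_dvd_right (k+1) d
    have h1 : Nat.gcd (k+1) d ∣ 2 * (k+1) - d := Nat.dvd_sub hg1 hg2
    have h2 : 2 * (k+1) - d = 1 := by omega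
    rw [h2] at h1
    exact Nat.eq_one_of_dvd_one h1
  rw [htau]
  exact hω.pow_of_coprime _ hcop

/-- `ee d x = τ^{x.val}`. -/
noncomputable def ee (d : ℕ) [NeZero d] (x : ZMod d) : ℂ := tau d ^ x.val

lemma ee_zero (d : ℕ) [NeZero d] : ee d 0 = 1 := by
  simp [ee, ZMod.val_zero]

lemma ee_add (d : ℕ) [NeZero d] (hodd : Odd d) (x y : ZMod d) :
    ee d (x + y) = ee d x * ee d y := by
  have h := tau_pow_d d hodd
  rw [ee, ee, ee, ← pow_add, ZMod.val_add]
  conv_rhs => rw [← Nat.mod_add_div (x.val + y.val) d]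
  rw [pow_add, pow_mul, h, one_pow, mul_one]

lemma ee_eq_one_iff (d : ℕ) [NeZero d] (hodd : Odd d) (x : ZMod d) :
    ee d x = 1 ↔ x = 0 := by
  constructor
  · intro h
    have hdvd : d ∣ x.val := (tau_prim d hodd).pow_eq_one_iff_dvd x.val |>.mp h
    have hlt : x.val < d := ZMod.val_lt x
    exact (ZMod.val_eq_zero x).mp (Nat.eq_zero_of_dvd_of_lt hdvd hlt)
  · rintro rfl; exact ee_zero d

lemma abs_tau (d : ℕ) : ‖tau d‖ = 1 := by
  have h : (Real.pi : ℂ) * Complex.I / d = ((Real.pi / d : ℝ) : ℂ) * Complex.I := by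
    push_cast; ring
  rw [tau, norm_neg, h, Complex.norm_exp_ofReal_mul_I]

lemma conj_ee (d : ℕ) [NeZero d] (hodd : Odd d) (x : ZMod d) :
    (starRingEnd ℂ) (ee d x) = ee d (-x) := by
  have h1 : ee d x * ee d (-x) = 1 := by
    rw [← ee_add d hodd, add_neg_cancel, ee_zero]
  have h2 : ‖ee d x‖ = 1 := by
    rw [ee, norm_pow, abs_tau, one_pow]
  rw [← Complex.inv_eq_conj h2]
  exact inv_eq_of_mul_eq_one_right h1

lemma sum_ee (d : ℕ) [NeZero d] (hodd : Odd d) {c : ZMod d} (hc : c ≠ 0) :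
    ∑ s : ZMod d, ee d (c * s) = 0 := by
  have h1 : ee d c ≠ 1 := fun h => hc ((ee_eq_one_iff d hodd c).mp h)
  have key : ee d c * ∑ s : ZMod d, ee d (c * s) = ∑ s : ZMod d, ee d (c * s) := by
    rw [Finset.mul_sum]
    refine Fintype.sum_equiv (Equiv.addRight (1 : ZMod d)) _ _ fun s => ?_
    simp only [Equiv.coe_addRight]
    rw [← ee_add d hodd]
    congr 1
    ring
  have h2 : (ee d c - 1) * ∑ s : ZMod d, ee d (c * s) = 0 := by
    rw [sub_mul, one_mul, key, sub_self]
  rcases mul_eq_zero.mp h2 with h | h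
  · exact absurd (sub_eq_zero.mp h) h1
  · exact h

lemma sympU_apply (d : ℕ) [NeZero d] (α β γ δ : ZMod d) (r s : ZMod d) :
    sympU d α β γ δ r s
      = (1 / Real.sqrt d : ℂ) * ee d (β⁻¹ * (δ * r ^ 2 - 2 * r * s + α * s ^ 2)) := rfl

lemma Disp_apply (d : ℕ) [NeZero d] (p : ZMod d × ZMod d) (r s : ZMod d) :
    Disp d p r s = ee d (p.1 * p.2 + 2 * p.2 * s) * (if r = s + p.1 then 1 else 0) := rfl

lemma sqrt_mul_self_complex (d : ℕ) :
    (1 / Real.sqrt d : ℂ) * (1 / Real.sqrt d : ℂ) = 1 / (d : ℂ) := by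
  have h : (Real.sqrt d) * (Real.sqrt d) = (d : ℝ) := Real.mul_self_sqrt (by positivity)
  rw [div_mul_div_comm, one_mul]
  congr 1
  rw [← Complex.ofReal_mul, h]
  norm_cast

end Aux

/-- If `F = [[α,β],[γ,δ]]` over `ℤ/dℤ` has `αδ - βγ = 1` and `β` invertible,
then `U_F` is unitary and `U_F D_p U_F† = D_{Fp}` for all `p`. -/
theorem sympU_unitary_and_covariant
    (d : ℕ) [NeZero d] (hodd : Odd d) (hd : 3 ≤ d)
    (α β γ δ : ZMod d) (hdet : α * δ - β * γ = 1) (hβ : IsUnit β) :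
    sympU d α β γ δ ∈ Matrix.unitaryGroup (ZMod d) ℂ ∧
    ∀ p : ZMod d × ZMod d,
      sympU d α β γ δ * Disp d p * (sympU d α β γ δ)ᴴ
        = Disp d (α * p.1 + β * p.2, γ * p.1 + δ * p.2) := by
  have hb : β * β⁻¹ = 1 := ZMod.mul_inv_of_unit β hβ
  have hβi : IsUnit (β⁻¹ : ZMod d) := IsUnit.of_mul_eq_one β (by rw [mul_comm]; exact hb)
  have h2u : IsUnit (2 : ZMod d) := by
    have : IsUnit ((2 : ℕ) : ZMod d) :=
      (ZMod.isUnit_iff_coprime 2 d).mpr (Nat.coprime_two_left.mpr hodd)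
    simpa using this
  have hdC : (d : ℂ) ≠ 0 := Nat.cast_ne_zero.mpr (NeZero.ne d)
  -- key entry formula for U * Uᴴ
  have key : ∀ r r' : ZMod d,
      (sympU d α β γ δ * (sympU d α β γ δ)ᴴ) r r'
        = (1 / (d : ℂ)) * (ee d (β⁻¹ * δ * (r ^ 2 - r' ^ 2)) *
            ∑ s : ZMod d, ee d (2 * β⁻¹ * (r' - r) * s)) := by
    intro r r'
    rw [mul_apply, Finset.mul_sum, Finset.mul_sum]
    refine Finset.sum_congr rfl fun s _ => ?_
    rw [conjTranspose_apply, sympU_apply, sympU_apply, star_mul']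
    rw [show (star (ee d (β⁻¹ * (δ * r' ^ 2 - 2 * r' * s + α * s ^ 2))) : ℂ)
        = ee d (-(β⁻¹ * (δ * r' ^ 2 - 2 * r' * s + α * s ^ 2))) from conj_ee d hodd _]
    rw [show (star ((1 / Real.sqrt d : ℂ))) = (1 / Real.sqrt d : ℂ) by
      simp [Complex.star_def, map_div₀, Complex.conj_ofReal]]
    calc (1 / Real.sqrt d : ℂ) * ee d (β⁻¹ * (δ * r ^ 2 - 2 * r * s + α * s ^ 2)) *
          ((1 / Real.sqrt d : ℂ) * ee d (-(β⁻¹ * (δ * r' ^ 2 - 2 * r' * s + α * s ^ 2))))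
        = ((1 / Real.sqrt d : ℂ) * (1 / Real.sqrt d : ℂ)) *
          (ee d (β⁻¹ * (δ * r ^ 2 - 2 * r * s + α * s ^ 2)) *
           ee d (-(β⁻¹ * (δ * r' ^ 2 - 2 * r' * s + α * s ^ 2)))) := by ring
      _ = (1 / (d : ℂ)) * ee d (β⁻¹ * (δ * r ^ 2 - 2 * r * s + α * s ^ 2) +
            -(β⁻¹ * (δ * r' ^ 2 - 2 * r' * s + α * s ^ 2))) := by
          rw [sqrt_mul_self_complex, ee_add d hodd]
      _ = (1 / (d : ℂ)) * ee d (β⁻¹ * δ * (r ^ 2 - r' ^ 2) + 2 * β⁻¹ * (r' - r) * s) := by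
          congr 1; congr 1; ring
      _ = (1 / (d : ℂ)) * (ee d (β⁻¹ * δ * (r ^ 2 - r' ^ 2)) *
            ee d (2 * β⁻¹ * (r' - r) * s)) := by rw [ee_add d hodd]
  have hUU1 : sympU d α β γ δ * (sympU d α β γ δ)ᴴ = 1 := by
    ext r r'
    rw [key r r', one_apply]
    by_cases h : r = r'
    · subst h
      rw [if_pos rfl]
      rw [show β⁻¹ * δ * (r ^ 2 - r ^ 2) = 0 by ring, ee_zero]
      simp only [show ∀ s : ZMod d, 2 * β⁻¹ * (r - r) * s = 0 from fun s => by ring, ee_zero]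
      rw [Finset.sum_const, Finset.card_univ, ZMod.card, nsmul_eq_mul, mul_one, one_mul]
      field_simp
    · rw [if_neg h]
      have hc : 2 * β⁻¹ * (r' - r) ≠ 0 := by
        intro h0
        exact (sub_ne_zero.mpr (Ne.symm h)) (((h2u.mul hβi).mul_right_eq_zero).mp h0)
      rw [sum_ee d hodd hc, mul_zero, mul_zero]
  constructor
  · exact Matrix.mem_unitaryGroup_iff.mpr
      (by rw [Matrix.star_eq_conjTranspose]; exact hUU1)
  · rintro ⟨i, j⟩
    have hcomm : sympU d α β γ δ * Disp d (i, j)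
        = Disp d (α * i + β * j, γ * i + δ * j) * sympU d α β γ δ := by
      ext r s
      rw [mul_apply, mul_apply]
      rw [Finset.sum_eq_single (s + i)
        (fun t _ ht => by
          rw [Disp_apply]
          simp only [if_neg (show ¬t = s + (i, j).1 from ht), mul_zero])
        (fun habs => absurd (Finset.mem_univ _) habs)]
      rw [Finset.sum_eq_single (r - (α * i + β * j))
        (fun t _ ht => by
          rw [Disp_apply]
          have : ¬r = t + (α * i + β * j, γ * i + δ * j).1 := fun h => ht (by
            simp only at h ⊢
            rw [h]; ring)
          simp only [if_neg this, mul_zero, zero_mul])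
        (fun habs => absurd (Finset.mem_univ _) habs)]
      rw [Disp_apply, Disp_apply, sympU_apply, sympU_apply]
      have e1 : (if (s + i : ZMod d) = s + (i, j).1 then (1 : ℂ) else 0) = 1 := if_pos rfl
      have e2 : (if r = r - (α * i + β * j) + (α * i + β * j, γ * i + δ * j).1
          then (1 : ℂ) else 0) = 1 := if_pos (by simp only; ring)
      simp only [e1, e2, if_true, mul_one]
      have hkey : β⁻¹ * (δ * r ^ 2 - 2 * r * (s + i) + α * (s + i) ^ 2) + (i * j + 2 * j * s)
          = ((α * i + β * j) * (γ * i + δ * j)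
              + 2 * (γ * i + δ * j) * (r - (α * i + β * j)))
            + β⁻¹ * (δ * (r - (α * i + β * j)) ^ 2 - 2 * (r - (α * i + β * j)) * s
              + α * s ^ 2) := by
        refine (hβ.mul_right_inj).mp ?_
        linear_combination (-2*i*r - 2*β*j*s + 2*β*δ*j*r - β^2*δ*j^2 + α*i^2
            + 2*α*δ*i*r - 2*α*β*δ*i*j - α^2*δ*i^2) * hb
          + (2*i*r - β*i*j - α*i^2) * hdet
      calc (1 / Real.sqrt d : ℂ)
            * ee d (β⁻¹ * (δ * r ^ 2 - 2 * r * (s + i) + α * (s + i) ^ 2))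
            * ee d (i * j + 2 * j * s)
          = (1 / Real.sqrt d : ℂ)
            * ee d (β⁻¹ * (δ * r ^ 2 - 2 * r * (s + i) + α * (s + i) ^ 2)
                + (i * j + 2 * j * s)) := by
              rw [ee_add d hodd (β⁻¹ * (δ * r ^ 2 - 2 * r * (s + i) + α * (s + i) ^ 2))
                (i * j + 2 * j * s)]
              ring
        _ = (1 / Real.sqrt d : ℂ)
            * ee d (((α * i + β * j) * (γ * i + δ * j)
                + 2 * (γ * i + δ * j) * (r - (α * i + β * j)))
              + β⁻¹ * (δ * (r - (α * i + β * j)) ^ 2 - 2 * (r - (α * i + β * j)) * s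
                + α * s ^ 2)) := by rw [hkey]
        _ = ee d ((α * i + β * j) * (γ * i + δ * j)
              + 2 * (γ * i + δ * j) * (r - (α * i + β * j)))
            * ((1 / Real.sqrt d : ℂ)
              * ee d (β⁻¹ * (δ * (r - (α * i + β * j)) ^ 2
                  - 2 * (r - (α * i + β * j)) * s + α * s ^ 2))) := by
            rw [ee_add d hodd ((α * i + β * j) * (γ * i + δ * j)
                + 2 * (γ * i + δ * j) * (r - (α * i + β * j)))
              (β⁻¹ * (δ * (r - (α * i + β * j)) ^ 2 - 2 * (r - (α * i + β * j)) * s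
                + α * s ^ 2))]
            ring
    calc sympU d α β γ δ * Disp d (i, j) * (sympU d α β γ δ)ᴴ
        = Disp d (α * i + β * j, γ * i + δ * j)
            * (sympU d α β γ δ * (sympU d α β γ δ)ᴴ) := by
          rw [← mul_assoc, hcomm, mul_assoc]
      _ = Disp d (α * i + β * j, γ * i + δ * j) := by rw [hUU1, mul_one]
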